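/- Let U = ℕ × ℕ, B_c = {(c,i) : i ∈ ℕ}, and 𝒞 = {⋃_{c∈x} B_c : x ⊆ ℕ, x ≠ ∅}. Then 𝒞 is not non-uniformly generatable with noise level 1: no generator algorithm G satisfies that for every K ∈ 𝒞 there exists t* such that for every enumeration of K with at most one extraneous string and all t ≥ t*, the output is an unseen element of K. -/

import Mathlib

open Set Classical

/-- The set of languages in `𝒞` consistent with sample `S` at noise level `i`. -/
def Consistent {U : Type*} (𝒞 : Set (Set U)) (S : Set U) (i : ℕ) : Set (Set U) :=
  {L | L ∈ 𝒞 ∧ (S \ L).encard ≤ (i : ℕ∞)}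

/-- The noisy closure of `S` at noise level `i`. -/
noncomputable def NoisyClosure {U : Type*} (𝒞 : Set (Set U)) (S : Set U) (i : ℕ) : Set U :=
  if (Consistent 𝒞 S i).Nonempty then ⋂ L ∈ Consistent 𝒞 S i, L else ∅

/-- The noisy closure dimension of `𝒞` at noise level `i`, as an extended natural. -/
noncomputable def NC {U : Type*} (𝒞 : Set (Set U)) (i : ℕ) : ℕ∞ :=
  ⨆ S ∈ {S : Set U | S.Finite ∧ (Consistent 𝒞 S i).Nonempty ∧
      (NoisyClosure 𝒞 S i).Finite}, S.encard

/-- `x` is an enumeration of `K` with noise level at most `i`. -/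
def IsNoisyEnum {U : Type*} (K : Set U) (i : ℕ) (x : ℕ → U) : Prop :=
  Function.Injective x ∧ K ⊆ Set.range x ∧ (Set.range x \ K).encard ≤ (i : ℕ∞)

/-- The set of strings revealed up to and including time `t`. -/
def seenSet {U : Type*} (x : ℕ → U) (t : ℕ) : Set U := x '' Set.Iic t

/-- The prefix `x₀, …, x_t` of the enumeration, as a list fed to the generator. -/
def prefixList {U : Type*} (x : ℕ → U) (t : ℕ) : List U := (List.range (t + 1)).map x

/-- `G` uniformly generates with noise level `i` for `𝒞`. -/
def UniformGen {U : Type*} (𝒞 : Set (Set U)) (i : ℕ) (G : List U → U) : Prop :=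
  ∃ t0 : ℕ, ∀ K ∈ 𝒞, ∀ x : ℕ → U, IsNoisyEnum K i x →
    ∀ t ≥ t0, G (prefixList x t) ∈ K \ seenSet x t

/-- `G` non-uniformly generates with noise level `i` for `𝒞`. -/
def NonUniformGen {U : Type*} (𝒞 : Set (Set U)) (i : ℕ) (G : List U → U) : Prop :=
  ∀ K ∈ 𝒞, ∃ t0 : ℕ, ∀ x : ℕ → U, IsNoisyEnum K i x →
    ∀ t ≥ t0, G (prefixList x t) ∈ K \ seenSet x t

/-- `G` uniformly noise-dependently generates for `𝒞`. -/
def UniformNoiseDepGen {U : Type*} (𝒞 : Set (Set U)) (G : List U → U) : Prop :=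
  ∀ n : ℕ, ∃ t0 : ℕ, ∀ K ∈ 𝒞, ∀ x : ℕ → U, IsNoisyEnum K n x →
    ∀ t ≥ t0, G (prefixList x t) ∈ K \ seenSet x t

/-- `G` non-uniformly noise-dependently generates for `𝒞`. -/
def NonUniformNoiseDepGen {U : Type*} (𝒞 : Set (Set U)) (G : List U → U) : Prop :=
  ∀ n : ℕ, ∀ K ∈ 𝒞, ∃ t0 : ℕ, ∀ x : ℕ → U, IsNoisyEnum K n x →
    ∀ t ≥ t0, G (prefixList x t) ∈ K \ seenSet x t

/-- The infinite "column" `B c` in the universe `ℕ × ℕ`. -/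
def column (c : ℕ) : Set (ℕ × ℕ) := {p | p.1 = c}

/-- The collection of all nonempty unions of columns. -/
def columnCollection : Set (Set (ℕ × ℕ)) :=
  {L | ∃ x : Set ℕ, x.Nonempty ∧ L = ⋃ c ∈ x, column c}

/-! ### Auxiliary material for the proof -/

/-- The "spread configuration" associated to a finite set of columns: the list
`[(c₁,0), (c₂,0), …]` with `c₁ < c₂ < …` the elements of `C`. -/
def cfgList (C : Finset ℕ) : List (ℕ × ℕ) := (C.sort (· ≤ ·)).map (fun c => (c, 0))

lemma cfgList_length (C : Finset ℕ) : (cfgList C).length = C.card := by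
  simp [cfgList]

lemma mem_cfgList {C : Finset ℕ} {p : ℕ × ℕ} : p ∈ cfgList C ↔ p.1 ∈ C ∧ p.2 = 0 := by
  constructor
  · intro hp
    simp only [cfgList, List.mem_map] at hp
    obtain ⟨a, ha, rfl⟩ := hp
    exact ⟨(Finset.mem_sort _).1 ha, rfl⟩
  · rintro ⟨h1, h2⟩
    simp only [cfgList, List.mem_map]
    exact ⟨p.1, (Finset.mem_sort _).2 h1, by rw [← h2]⟩

lemma cfgList_nodup (C : Finset ℕ) : (cfgList C).Nodup := by
  refine List.Nodup.map ?_ (C.sort_nodup _)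
  intro a b hab
  simpa using hab

/-- Every infinite set of pairs of naturals can be enumerated injectively. -/
lemma exists_enum {D : Set (ℕ × ℕ)} (hD : D.Infinite) :
    ∃ e : ℕ → ℕ × ℕ, Function.Injective e ∧ Set.range e = D := by
  have hc : Countable D := (Set.to_countable D).to_subtype
  have hi : Infinite D := hD.to_subtype
  obtain ⟨d⟩ := nonempty_denumerable D
  refine ⟨fun k => ((Denumerable.eqv D).symm k : ℕ × ℕ), ?_, ?_⟩
  · intro a b hab
    exact (Denumerable.eqv D).symm.injective (Subtype.coe_injective hab)
  · ext p
    constructor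
    · rintro ⟨k, rfl⟩
      exact ((Denumerable.eqv D).symm k).2
    · intro hp
      exact ⟨Denumerable.eqv D ⟨p, hp⟩, by simp⟩

/-- If some infinite set `A` of columns admits arbitrarily large spread configurations on
which the generator's output falls outside `A` (with at most one configuration element
outside `A`), then `G` is not a non-uniform noisy generator. -/
lemma main_contra (G : List (ℕ × ℕ) → ℕ × ℕ) (A : Set ℕ) (hA : A.Infinite)
    (hbad : ∀ m : ℕ, ∃ C : Finset ℕ, m ≤ C.card ∧ ((C : Set ℕ) \ A) ⊆ {(G (cfgList C)).1} ∧
      (G (cfgList C)).1 ∉ A) :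
    ¬ NonUniformGen columnCollection 1 G := by
  intro hG
  set K : Set (ℕ × ℕ) := ⋃ c ∈ A, column c with hK
  have memK : ∀ p : ℕ × ℕ, p ∈ K ↔ p.1 ∈ A := by
    intro p
    simp [hK, column, Set.mem_iUnion]
  obtain ⟨t0, ht0⟩ := hG K ⟨A, hA.nonempty, rfl⟩
  obtain ⟨C, hCcard, hCsub, hCout⟩ := hbad (t0 + 1)
  set l := cfgList C with hl
  set n := C.card with hn
  have hln : l.length = n := cfgList_length C
  -- the rest of the enumeration
  set T : Set (ℕ × ℕ) := {p | p ∈ l} with hT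
  have hTfin : T.Finite := l.finite_toSet
  set D : Set (ℕ × ℕ) := K \ T with hD
  have hDinf : D.Infinite := by
    obtain ⟨a, ha⟩ := hA.nonempty
    have h1 : (Set.range fun i : ℕ => ((a, i) : ℕ × ℕ)).Infinite := by
      apply Set.infinite_range_of_injective
      intro i j hij
      simpa using hij
    have h2 : (Set.range fun i : ℕ => ((a, i) : ℕ × ℕ)) ⊆ K := by
      rintro p ⟨i, rfl⟩
      exact (memK _).2 ha
    exact ((h1.mono h2 : K.Infinite)).diff hTfin
  obtain ⟨e, he_inj, he_range⟩ := exists_enum hDinf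
  -- the enumeration
  set x : ℕ → ℕ × ℕ := fun t => if h : t < n then l.get ⟨t, by omega⟩ else e (t - n) with hx
  have hx_lt : ∀ t (h : t < n), x t = l.get ⟨t, by omega⟩ := by
    intro t h; simp [hx, h]
  have hx_ge : ∀ t, n ≤ t → x t = e (t - n) := by
    intro t h; simp [hx, Nat.not_lt.2 h]
  have hmemD : ∀ j : ℕ, e j ∈ D := by
    intro j; rw [← he_range]; exact ⟨j, rfl⟩
  have hgetT : ∀ (i : Fin l.length), l.get i ∈ T := fun i => l.get_mem _
  have hinj : Function.Injective x := by
    intro a b hab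
    by_cases ha : a < n <;> by_cases hb : b < n
    · rw [hx_lt a ha, hx_lt b hb] at hab
      have := List.nodup_iff_injective_get.1 (cfgList_nodup C) hab
      simpa using this
    · rw [hx_lt a ha, hx_ge b (by omega)] at hab
      exact absurd (hab ▸ hgetT ⟨a, by omega⟩) (hmemD (b - n)).2
    · rw [hx_ge a (by omega), hx_lt b hb] at hab
      exact absurd (hab ▸ hgetT ⟨b, by omega⟩) ((hmemD (a - n)).2)
    · rw [hx_ge a (by omega), hx_ge b (by omega)] at hab
      have := he_inj hab
      omega
  have hKsub : K ⊆ Set.range x := by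
    intro p hp
    by_cases hpT : p ∈ T
    · obtain ⟨i, hi⟩ := List.mem_iff_get.1 hpT
      refine ⟨i.1, ?_⟩
      rw [hx_lt i.1 (by omega), ← hi]
    · obtain ⟨j, hj⟩ : p ∈ Set.range e := by rw [he_range]; exact ⟨hp, hpT⟩
      refine ⟨n + j, ?_⟩
      rw [hx_ge (n + j) (by omega)]
      simpa using hj
  have hnoise : (Set.range x \ K) ⊆ {((G l).1, 0)} := by
    rintro p ⟨⟨t, rfl⟩, hpK⟩
    by_cases ht : t < n
    · rw [hx_lt t ht] at hpK ⊢
      have hmem : l.get ⟨t, by omega⟩ ∈ l := hgetT _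
      obtain ⟨h1, h2⟩ := mem_cfgList.1 hmem
      have hA1 : (l.get ⟨t, by omega⟩).1 ∉ A := fun hcon => hpK ((memK _).2 hcon)
      have : (l.get ⟨t, by omega⟩).1 ∈ (C : Set ℕ) \ A := ⟨h1, hA1⟩
      have heq := hCsub this
      simp only [Set.mem_singleton_iff] at heq
      have : l.get ⟨t, by omega⟩ = ((G l).1, 0) := by
        rw [← heq]
        exact Prod.ext rfl h2
      rw [this]
      rfl
    · exfalso
      rw [hx_ge t (by omega)] at hpK
      exact hpK (hmemD (t - n)).1
  have hnoisy : IsNoisyEnum K 1 x := by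
    refine ⟨hinj, hKsub, ?_⟩
    calc (Set.range x \ K).encard ≤ ({((G l).1, 0)} : Set (ℕ × ℕ)).encard :=
          Set.encard_mono hnoise
      _ = 1 := Set.encard_singleton _
      _ ≤ ((1 : ℕ) : ℕ∞) := by norm_num
  have hn1 : 1 ≤ n := by omega
  have hpre : prefixList x (n - 1) = l := by
    have hn' : n - 1 + 1 = n := by omega
    apply List.ext_get
    · simp [prefixList, hn', hln]
    · intro i h1 h2
      simp only [prefixList, hn'] at h1 ⊢
      rw [List.get_eq_getElem, List.getElem_map]
      have hi : i < n := by simpa using h1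
      rw [List.getElem_range]
      exact congrArg _ rfl |>.trans (by rw [hx_lt i hi])
  have hfin := ht0 x hnoisy (n - 1) (by omega)
  rw [hpre] at hfin
  exact hCout ((memK _).1 hfin.1)

/-! ### The adaptive construction (case where all output columns have bounded usage) -/

/-- One round of the adaptive adversary: the state is a pair `(E, X)` of committed
columns `E` and excluded columns `X`. -/
noncomputable def St (G : List (ℕ × ℕ) → ℕ × ℕ) (β : ℕ → ℕ) : ℕ → Finset ℕ × Finset ℕ
  | 0 => (∅, ∅)
  | (m+1) =>
      let s := St G β m
      let Y := Finset.Ico (m + 1 + (s.1 ∪ s.2).sup id)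
        (m + 1 + (s.1 ∪ s.2).sup id + (m + 1 + s.1.sup β))
      let v := (G (cfgList (s.1 ∪ Y))).1
      (s.1 ∪ Y.erase v, s.2 ∪ {v})

/-- The fresh block of columns presented at round `m`. -/
noncomputable def YS (G : List (ℕ × ℕ) → ℕ × ℕ) (β : ℕ → ℕ) (m : ℕ) : Finset ℕ :=
  Finset.Ico (m + 1 + ((St G β m).1 ∪ (St G β m).2).sup id)
    (m + 1 + ((St G β m).1 ∪ (St G β m).2).sup id + (m + 1 + (St G β m).1.sup β))

/-- The configuration presented at round `m`. -/
noncomputable def CS (G : List (ℕ × ℕ) → ℕ × ℕ) (β : ℕ → ℕ) (m : ℕ) : Finset ℕ :=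
  (St G β m).1 ∪ YS G β m

/-- The column output by the generator at round `m`. -/
noncomputable def vS (G : List (ℕ × ℕ) → ℕ × ℕ) (β : ℕ → ℕ) (m : ℕ) : ℕ :=
  (G (cfgList (CS G β m))).1

lemma St_succ (G : List (ℕ × ℕ) → ℕ × ℕ) (β : ℕ → ℕ) (m : ℕ) :
    St G β (m+1) = ((St G β m).1 ∪ (YS G β m).erase (vS G β m),
      (St G β m).2 ∪ {vS G β m}) := rfl

lemma card_YS (G : List (ℕ × ℕ) → ℕ × ℕ) (β : ℕ → ℕ) (m : ℕ) :
    (YS G β m).card = m + 1 + (St G β m).1.sup β := by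
  simp [YS]

lemma mem_YS_ge {G : List (ℕ × ℕ) → ℕ × ℕ} {β : ℕ → ℕ} {m a : ℕ} (h : a ∈ YS G β m) :
    m + 1 + ((St G β m).1 ∪ (St G β m).2).sup id ≤ a := (Finset.mem_Ico.1 h).1

lemma mem_state_lt {G : List (ℕ × ℕ) → ℕ × ℕ} {β : ℕ → ℕ} {m a : ℕ}
    (h : a ∈ (St G β m).1 ∪ (St G β m).2) :
    a < m + 1 + ((St G β m).1 ∪ (St G β m).2).sup id := by
  have := Finset.le_sup (f := id) h
  simp only [id] at this
  omega

lemma E_mono (G : List (ℕ × ℕ) → ℕ × ℕ) (β : ℕ → ℕ) {k l : ℕ} (h : k ≤ l) :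
    (St G β k).1 ⊆ (St G β l).1 := by
  induction l with
  | zero => simp_all
  | succ l ih =>
    rcases Nat.lt_or_ge k (l+1) with h' | h'
    · refine (ih (by omega)).trans ?_
      rw [St_succ]
      exact Finset.subset_union_left
    · have : k = l + 1 := by omega
      subst this; exact Finset.Subset.refl _

lemma X_mono (G : List (ℕ × ℕ) → ℕ × ℕ) (β : ℕ → ℕ) {k l : ℕ} (h : k ≤ l) :
    (St G β k).2 ⊆ (St G β l).2 := by
  induction l with
  | zero => simp_all
  | succ l ih =>
    rcases Nat.lt_or_ge k (l+1) with h' | h'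
    · refine (ih (by omega)).trans ?_
      rw [St_succ]
      exact Finset.subset_union_left
    · have : k = l + 1 := by omega
      subst this; exact Finset.Subset.refl _

section Case2

variable {G : List (ℕ × ℕ) → ℕ × ℕ} {β : ℕ → ℕ}
variable (hβ : ∀ c : ℕ, ∀ C : Finset ℕ, β c ≤ C.card → (G (cfgList C)).1 ≠ c)

include hβ

lemma vS_not_mem_E (m : ℕ) : vS G β m ∉ (St G β m).1 := by
  intro hmem
  have h1 : β (vS G β m) ≤ (St G β m).1.sup β := Finset.le_sup hmem
  have h2 : (YS G β m).card ≤ (CS G β m).card :=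
    Finset.card_le_card Finset.subset_union_right
  rw [card_YS] at h2
  exact hβ (vS G β m) (CS G β m) (by omega) rfl

lemma disj_state (m : ℕ) : Disjoint (St G β m).1 (St G β m).2 := by
  induction m with
  | zero => simp [St]
  | succ m ih =>
    rw [St_succ]
    rw [Finset.disjoint_union_left, Finset.disjoint_union_right, Finset.disjoint_union_right]
    refine ⟨⟨ih, ?_⟩, ⟨?_, ?_⟩⟩
    · simp only [Finset.disjoint_singleton_right]
      exact vS_not_mem_E hβ m
    · rw [Finset.disjoint_left]
      intro a ha hX
      have h1 := mem_YS_ge (Finset.mem_of_mem_erase ha)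
      have h2 := mem_state_lt (G := G) (β := β) (m := m) (Finset.mem_union_right _ hX)
      omega
    · simp only [Finset.disjoint_singleton_right]
      exact Finset.notMem_erase _ _

lemma vS_not_mem_A (m k : ℕ) : vS G β m ∉ (St G β k).1 := by
  rcases le_or_gt k m with h | h
  · intro hmem
    exact vS_not_mem_E hβ m (E_mono G β h hmem)
  · intro hmem
    have hX : vS G β m ∈ (St G β k).2 := by
      refine X_mono G β h ?_
      rw [St_succ]
      exact Finset.mem_union_right _ (Finset.mem_singleton_self _)
    exact (Finset.disjoint_left.1 (disj_state hβ k)) hmem hX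

end Case2

theorem stmt15 :
    ¬ ∃ G : List (ℕ × ℕ) → ℕ × ℕ, NonUniformGen columnCollection 1 G := by
  rintro ⟨G, hG⟩
  by_cases h1 : ∃ c : ℕ, ∀ m : ℕ, ∃ C : Finset ℕ, m ≤ C.card ∧ (G (cfgList C)).1 = c
  · -- Case 1: some output column recurs on arbitrarily large configurations
    obtain ⟨c, hc⟩ := h1
    choose Cm hm hv using hc
    set A : Set ℕ := (⋃ m, ((Cm m : Set ℕ))) \ {c} with hA
    have hsub : ∀ m, ((Cm m : Set ℕ)) ⊆ A ∪ {c} := by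
      intro m a ha
      by_cases hac : a = c
      · exact Or.inr hac
      · exact Or.inl ⟨Set.mem_iUnion.2 ⟨m, ha⟩, hac⟩
    have hAinf : A.Infinite := by
      by_contra hfin
      rw [Set.not_infinite] at hfin
      have hUfin : (A ∪ {c}).Finite := hfin.union (Set.finite_singleton c)
      set F := hUfin.toFinset with hF
      have hcard : ∀ m, (Cm m).card ≤ F.card := by
        intro m
        apply Finset.card_le_card
        intro a ha
        rw [Set.Finite.mem_toFinset]
        exact hsub m ha
      have := hcard (F.card + 1)
      have := hm (F.card + 1)
      omega
    refine main_contra G A hAinf ?_ hG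
    intro m
    refine ⟨Cm m, hm m, ?_, ?_⟩
    · rw [hv m]
      rintro a ⟨ha, haA⟩
      rcases hsub m ha with h | h
      · exact absurd h haA
      · exact h
    · rw [hv m]
      rintro ⟨-, hcc⟩
      exact hcc rfl
  · -- Case 2: every column is output only on boundedly large configurations
    push_neg at h1
    have h1' : ∀ c : ℕ, ∃ m : ℕ, ∀ C : Finset ℕ, m ≤ C.card → (G (cfgList C)).1 ≠ c := by
      intro c
      obtain ⟨m, hm⟩ := h1 c
      exact ⟨m, fun C hC => hm C hC⟩
    choose β hβ using h1'
    set A : Set ℕ := ⋃ m, ((St G β m).1 : Set ℕ) with hA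
    have hEA : ∀ m, ((St G β m).1 : Set ℕ) ⊆ A := fun m => Set.subset_iUnion
      (fun m => ((St G β m).1 : Set ℕ)) m
    have hvA : ∀ m, vS G β m ∉ A := by
      intro m hmem
      obtain ⟨k, hk⟩ := Set.mem_iUnion.1 hmem
      exact vS_not_mem_A hβ m k hk
    have hAinf : A.Infinite := by
      by_contra hfin
      rw [Set.not_infinite] at hfin
      obtain ⟨b, hb⟩ := hfin.bddAbove
      -- find an element of A bigger than b
      set m := b + 1 with hmdef
      have hcard : 1 ≤ ((YS G β m).erase (vS G β m)).card := by
        have h1 := card_YS G β m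
        have h2 := Finset.pred_card_le_card_erase (a := vS G β m) (s := YS G β m)
        omega
      obtain ⟨y, hy⟩ := Finset.card_pos.1 hcard
      have hyY : y ∈ YS G β m := Finset.mem_of_mem_erase hy
      have hyA : y ∈ A := by
        apply hEA (m + 1)
        rw [St_succ]
        exact Finset.mem_union_right _ hy
      have := mem_YS_ge hyY
      have := hb hyA
      omega
    refine main_contra G A hAinf ?_ hG
    intro m
    refine ⟨CS G β m, ?_, ?_, hvA m⟩
    · have h2 : (YS G β m).card ≤ (CS G β m).card :=
        Finset.card_le_card Finset.subset_union_right
      rw [card_YS] at h2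
      omega
    · rintro a ⟨ha, haA⟩
      rcases Finset.mem_union.1 ha with h | h
      · exact absurd (hEA m h) haA
      · by_cases hav : a = vS G β m
        · exact hav
        · exfalso
          apply haA
          apply hEA (m + 1)
          rw [St_succ]
          exact Finset.mem_union_right _ (Finset.mem_erase.2 ⟨hav, h⟩)
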